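/- Let Γ ∈ ℝ^{n×n} be symmetric, γ ∈ ℝ^n, and δ ∈ ℝ. Suppose L_0 ∈ ℝ^{n×n} satisfies L_0 L_0^⊤ = δ·ee^⊤ − Γ, the vector r ∈ ℝ^n satisfies L_0 r = δe − γ, and ρ ∈ ℝ satisfies ρ² = δ − ‖r‖². Let M ∈ ℝ^{(n+1)×(n+1)} be the block matrix M = [[ρ, r^⊤],[0, L_0]] and let D = [−e | I] ∈ ℝ^{n×(n+1)}. Then γe^⊤ + eγ^⊤ − Γ = (D M)(D M)^⊤. -/
import Mathlib


open Matrix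

/-- Twisted Cholesky factorization of the intrinsic-random-field covariance:
if `L₀L₀ᵀ = δeeᵀ - Γ`, `L₀r = δe - γ` and `ρ² = δ - ‖r‖²`, then with
`M = [[ρ, rᵀ],[0, L₀]]` and `D = [-e | I]` one has
`γeᵀ + eγᵀ - Γ = (DM)(DM)ᵀ`. -/
theorem twisted_factorization_of_IRF_covariance
    (n : ℕ) (Γ : Matrix (Fin n) (Fin n) ℝ) (γ : Fin n → ℝ) (δ : ℝ)
    (L0 : Matrix (Fin n) (Fin n) ℝ)
    (hL0 : L0 * L0ᵀ = Matrix.of fun i j : Fin n => δ - Γ i j)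
    (r : Fin n → ℝ) (hr : L0.mulVec r = fun i => δ - γ i)
    (ρ : ℝ) (hρ : ρ ^ 2 = δ - ∑ i, r i ^ 2)
    (M : Matrix (Fin (n + 1)) (Fin (n + 1)) ℝ)
    (hM : ∀ i j, M i j =
      Fin.cases (Fin.cases ρ (fun j' => r j') j)
        (fun i' => Fin.cases (0 : ℝ) (fun j' => L0 i' j') j) i)
    (D : Matrix (Fin n) (Fin (n + 1)) ℝ)
    (hD : ∀ i j, D i j = Fin.cases (-1 : ℝ) (fun j' => if i = j' then 1 else 0) j) :
    (Matrix.of fun i j : Fin n => γ i + γ j - Γ i j) = (D * M) * (D * M)ᵀ := by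
  have hDM : ∀ (i : Fin n) (k : Fin (n + 1)), (D * M) i k = -M 0 k + M i.succ k := by
    intro i k
    simp [Matrix.mul_apply, hD, Fin.sum_univ_succ, ite_mul, Finset.sum_ite_eq]
  have h1 : ∀ i j, ∑ k, L0 i k * L0 j k = δ - Γ i j := by
    intro i j
    have := congrFun (congrFun hL0 i) j
    simpa [Matrix.mul_apply] using this
  have h2 : ∀ i, ∑ k, L0 i k * r k = δ - γ i := by
    intro i
    have := congrFun hr i
    simpa [Matrix.mulVec, dotProduct] using this
  ext i j
  rw [show ((D * M) * (D * M)ᵀ) i j = ∑ k, (D * M) i k * (D * M) j k from by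
    simp [Matrix.mul_apply, Matrix.transpose_apply, mul_comm]]
  rw [Fin.sum_univ_succ]
  simp only [hDM, hM, Fin.cases_zero, Fin.cases_succ, Matrix.of_apply]
  have expand : ∑ k, (-r k + L0 i k) * (-r k + L0 j k)
      = ∑ k, (L0 i k * L0 j k - L0 i k * r k - L0 j k * r k + r k ^ 2) := by
    apply Finset.sum_congr rfl
    intro k _
    ring
  rw [expand, Finset.sum_add_distrib, Finset.sum_sub_distrib, Finset.sum_sub_distrib,
    h1 i j, h2 i, h2 j]
  have : (-ρ + 0) * (-ρ + 0) = ρ ^ 2 := by ring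
  rw [this, hρ]
  ring
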